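/- Let X be a finite set of positive integers, let t ≥ 0 and r ≥ 1 be integers, and let Δ₀, Δ₁ ≥ 0 be real numbers with Δ₀ ≤ t/2. Suppose (X', X'') is a weighted (t,Δ₀)-halver of X, (X'_1,…,X'_r) is a weighted r-way (t,Δ₁)-splitter of X', and (X''_1,…,X''_r) is a weighted r-way (t,Δ₁)-splitter of X''. Then (X'_1,…,X'_r, X''_1,…,X''_r) is a weighted 2r-way (t, Δ₀/r + Δ₁)-splitter of X. -/

import Mathlib

/-- `SUM S` is the sum of the elements of the finite set `S`. -/
def SUM (S : Finset ℕ) : ℕ := S.sum id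

/-- `(X', X'')` is a weighted `(t, Δ)`-halver of `X`. -/
def IsWeightedHalver (X X' X'' : Finset ℕ) (t Δ : ℝ) : Prop :=
  X' ∪ X'' = X ∧ Disjoint X' X'' ∧
  ∀ S ⊆ X, (SUM S : ℝ) ≤ t →
    ∃ Shat ⊆ X, SUM Shat = SUM S ∧
      ((SUM (Shat ∩ X') : ℝ) ≤ (SUM Shat : ℝ) / 2 + Δ) ∧
      ((SUM (Shat ∩ X'') : ℝ) ≤ (SUM Shat : ℝ) / 2 + Δ)

/-- `Xs` is a weighted `r`-way `(t, Δ)`-splitter of `X`. -/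
def IsWeightedSplitter (X : Finset ℕ) (r : ℕ) (Xs : Fin r → Finset ℕ) (t Δ : ℝ) : Prop :=
  Finset.univ.biUnion Xs = X ∧ (∀ i j, i ≠ j → Disjoint (Xs i) (Xs j)) ∧
  ∀ S ⊆ X, (SUM S : ℝ) ≤ t →
    ∃ Shat ⊆ X, SUM Shat = SUM S ∧
      ∀ j, (SUM (Shat ∩ Xs j) : ℝ) ≤ (SUM Shat : ℝ) / (r : ℝ) + Δ

lemma fin_add_cases' {r : ℕ} (k : Fin (r + r)) :
    (∃ i, k = Fin.castAdd r i) ∨ (∃ i, k = Fin.natAdd r i) := by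
  refine Fin.addCases (fun i => ?_) (fun i => ?_) k
  · exact Or.inl ⟨i, rfl⟩
  · exact Or.inr ⟨i, rfl⟩

theorem stmt_15 (X X' X'' : Finset ℕ) (hpos : ∀ x ∈ X, 0 < x)
    (t : ℕ) (r : ℕ) (hr : 1 ≤ r) (Δ₀ Δ₁ : ℝ) (hΔ₀ : 0 ≤ Δ₀) (hΔ₁ : 0 ≤ Δ₁)
    (hΔ₀t : Δ₀ ≤ (t : ℝ) / 2)
    (hhal : IsWeightedHalver X X' X'' (t : ℝ) Δ₀)
    (Xs' Xs'' : Fin r → Finset ℕ)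
    (hs' : IsWeightedSplitter X' r Xs' (t : ℝ) Δ₁)
    (hs'' : IsWeightedSplitter X'' r Xs'' (t : ℝ) Δ₁) :
    IsWeightedSplitter X (r + r) (Fin.append Xs' Xs'') (t : ℝ) (Δ₀ / (r : ℝ) + Δ₁) := by
  obtain ⟨hU, hD, hH⟩ := hhal
  obtain ⟨hU', hD', hS'⟩ := hs'
  obtain ⟨hU'', hD'', hS''⟩ := hs''
  have hsub' : ∀ i, Xs' i ⊆ X' := fun i =>
    hU' ▸ Finset.subset_biUnion_of_mem Xs' (Finset.mem_univ i)
  have hsub'' : ∀ i, Xs'' i ⊆ X'' := fun i =>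
    hU'' ▸ Finset.subset_biUnion_of_mem Xs'' (Finset.mem_univ i)
  have hrpos : (0:ℝ) < r := by exact_mod_cast hr
  refine ⟨?_, ?_, ?_⟩
  · apply Finset.Subset.antisymm
    · intro x hx
      obtain ⟨k, -, hk⟩ := Finset.mem_biUnion.1 hx
      rcases fin_add_cases' k with ⟨i, rfl⟩ | ⟨i, rfl⟩
      · rw [Fin.append_left] at hk
        exact hU ▸ Finset.mem_union_left _ (hsub' i hk)
      · rw [Fin.append_right] at hk
        exact hU ▸ Finset.mem_union_right _ (hsub'' i hk)
    · intro x hx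
      rw [← hU] at hx
      rcases Finset.mem_union.1 hx with h | h
      · rw [← hU'] at h
        obtain ⟨i, -, hi⟩ := Finset.mem_biUnion.1 h
        exact Finset.mem_biUnion.2 ⟨Fin.castAdd r i, Finset.mem_univ _, by rwa [Fin.append_left]⟩
      · rw [← hU''] at h
        obtain ⟨i, -, hi⟩ := Finset.mem_biUnion.1 h
        exact Finset.mem_biUnion.2 ⟨Fin.natAdd r i, Finset.mem_univ _, by rwa [Fin.append_right]⟩
  · intro i j hij
    rcases fin_add_cases' i with ⟨a, rfl⟩ | ⟨a, rfl⟩ <;>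
      rcases fin_add_cases' j with ⟨b, rfl⟩ | ⟨b, rfl⟩
    · rw [Fin.append_left, Fin.append_left]
      exact hD' a b (fun h => hij (by rw [h]))
    · rw [Fin.append_left, Fin.append_right]
      exact hD.mono (hsub' a) (hsub'' b)
    · rw [Fin.append_right, Fin.append_left]
      exact (hD.mono (hsub' b) (hsub'' a)).symm
    · rw [Fin.append_right, Fin.append_right]
      refine hD'' a b (fun h => hij (by rw [h]))
  · intro S hS hSt
    obtain ⟨Sh, hShX, hSheq, h1, h2⟩ := hH S hS hSt
    have hdisj : Disjoint (Sh ∩ X') (Sh ∩ X'') :=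
      hD.mono Finset.inter_subset_right Finset.inter_subset_right
    have hsplit : (Sh ∩ X') ∪ (Sh ∩ X'') = Sh := by
      rw [← Finset.inter_union_distrib_left, hU]
      exact Finset.inter_eq_left.2 hShX
    have hsum : SUM (Sh ∩ X') + SUM (Sh ∩ X'') = SUM Sh := by
      rw [SUM, SUM, SUM, ← Finset.sum_union hdisj, hsplit]
    have hShS : (SUM Sh : ℝ) ≤ (t : ℝ) := by rw [hSheq]; exact hSt
    have hb1 : (SUM (Sh ∩ X') : ℝ) ≤ (t : ℝ) := by linarith
    have hb2 : (SUM (Sh ∩ X'') : ℝ) ≤ (t : ℝ) := by linarith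
    obtain ⟨T1, hT1X, hT1eq, hT1⟩ := hS' (Sh ∩ X') Finset.inter_subset_right hb1
    obtain ⟨T2, hT2X, hT2eq, hT2⟩ := hS'' (Sh ∩ X'') Finset.inter_subset_right hb2
    have hT12 : Disjoint T1 T2 := hD.mono hT1X hT2X
    have hTsum : SUM (T1 ∪ T2) = SUM Sh := by
      rw [SUM, Finset.sum_union hT12, ← hsum]
      rw [SUM, SUM] at hT1eq hT2eq
      rw [hT1eq, hT2eq]; rfl
    refine ⟨T1 ∪ T2, ?_, by rw [hTsum, hSheq], ?_⟩
    · intro x hx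
      rcases Finset.mem_union.1 hx with h | h
      · exact hU ▸ Finset.mem_union_left _ (hT1X h)
      · exact hU ▸ Finset.mem_union_right _ (hT2X h)
    · intro j
      have hcast : ((r + r : ℕ) : ℝ) = 2 * r := by push_cast; ring
      rcases fin_add_cases' j with ⟨a, rfl⟩ | ⟨a, rfl⟩
      · rw [Fin.append_left]
        have he : (T1 ∪ T2) ∩ Xs' a = T1 ∩ Xs' a := by
          rw [Finset.union_inter_distrib_right,
            Finset.disjoint_iff_inter_eq_empty.1 ((hD.mono (hsub' a) hT2X).symm),
            Finset.union_empty]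
        have hT1b : (SUM T1 : ℝ) ≤ (SUM Sh : ℝ) / 2 + Δ₀ := by
          rw [hT1eq]; exact h1
        have := hT1 a
        rw [he, hTsum, hcast]
        have h3 : (SUM T1 : ℝ) / r ≤ ((SUM Sh : ℝ) / 2 + Δ₀) / r := by gcongr
        have h4 : ((SUM Sh : ℝ) / 2 + Δ₀) / r = (SUM Sh : ℝ) / (2 * r) + Δ₀ / r := by
          field_simp
        linarith [this, h3, h4 ▸ h3]
      · rw [Fin.append_right]
        have he : (T1 ∪ T2) ∩ Xs'' a = T2 ∩ Xs'' a := by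
          rw [Finset.union_inter_distrib_right,
            Finset.disjoint_iff_inter_eq_empty.1 (hD.mono hT1X (hsub'' a)),
            Finset.empty_union]
        have hT2b : (SUM T2 : ℝ) ≤ (SUM Sh : ℝ) / 2 + Δ₀ := by
          rw [hT2eq]; exact h2
        have := hT2 a
        rw [he, hTsum, hcast]
        have h3 : (SUM T2 : ℝ) / r ≤ ((SUM Sh : ℝ) / 2 + Δ₀) / r := by gcongr
        have h4 : ((SUM Sh : ℝ) / 2 + Δ₀) / r = (SUM Sh : ℝ) / (2 * r) + Δ₀ / r := by
          field_simp
        linarith [this, h3]
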